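/- Let l ≥ 5. Realize the root system Φ of type D_l concretely as Φ = {±eᵢ ± eⱼ : 1 ≤ i < j ≤ l} ⊂ ℚˡ with the standard inner product ⟨·,·⟩, let δ = e₁ + e₂, Φ₀ = {α ∈ Φ : ⟨α, δ⟩ = 0}, Φ₁ = {α ∈ Φ : ⟨α, δ⟩ = 1}, and let W₀ be the group generated by the reflections s_α for α ∈ Φ₀. Then the action of W₀ on the collection of 2-element subsets {α, β} ⊆ Φ₁ with ⟨α, β⟩ = 0 has exactly two orbits. -/

import Mathlib

/-- The standard inner product on `ℚˡ`. -/
def ip {l : ℕ} (x y : Fin l → ℚ) : ℚ := ∑ i, x i * y i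

/-- The standard basis vector `eᵢ` of `ℚˡ`. -/
def ev {l : ℕ} (i : Fin l) : Fin l → ℚ := Pi.single i 1

/-- The root system of type `D_l`: `Φ = {±eᵢ ± eⱼ : i < j}`. -/
def PhiD (l : ℕ) : Set (Fin l → ℚ) :=
  {α | ∃ i j : Fin l, i < j ∧
    (α = ev i + ev j ∨ α = ev i - ev j ∨ α = -ev i + ev j ∨ α = -ev i - ev j)}

/-- The maximal root `δ = e₁ + e₂` of `D_l`. -/
def deltaD (l : ℕ) (hl : 4 ≤ l) : Fin l → ℚ :=
  ev ⟨0, by omega⟩ + ev ⟨1, by omega⟩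

/-- The roots orthogonal to `δ`. -/
def Phi0D (l : ℕ) (hl : 4 ≤ l) : Set (Fin l → ℚ) :=
  {α ∈ PhiD l | ip α (deltaD l hl) = 0}

/-- The roots with `⟨α, δ⟩ = 1`. -/
def Phi1D (l : ℕ) (hl : 4 ≤ l) : Set (Fin l → ℚ) :=
  {α ∈ PhiD l | ip α (deltaD l hl) = 1}

/-- The group `W₀` generated by the reflections `s_α`, `α ∈ Φ₀`. -/
def W0D (l : ℕ) (hl : 4 ≤ l) : Subgroup ((Fin l → ℚ) ≃ₗ[ℚ] (Fin l → ℚ)) :=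
  Subgroup.closure
    {g | ∃ α ∈ Phi0D l hl, ∀ x, g x = x - (2 * ip x α / ip α α) • α}

/-- The collection of 2-element subsets of `Φ₁` consisting of orthogonal roots. -/
def OrthPairsD (l : ℕ) (hl : 4 ≤ l) : Set (Set (Fin l → ℚ)) :=
  {S | S ⊆ Phi1D l hl ∧ S.ncard = 2 ∧ ∀ α ∈ S, ∀ β ∈ S, α ≠ β → ip α β = 0}

/-- `S` and `T` lie in the same `W₀`-orbit (elementwise action on subsets). -/
def SameW0OrbitD (l : ℕ) (hl : 4 ≤ l) (S T : Set (Fin l → ℚ)) : Prop :=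
  ∃ w ∈ W0D l hl, (fun x => w x) '' S = T


namespace Aux
variable {l : ℕ}

lemma ip_ev_right (x : Fin l → ℚ) (j : Fin l) : ip x (ev j) = x j := by
  simp [ip, ev, Pi.single_apply]

lemma ip_ev_left (x : Fin l → ℚ) (j : Fin l) : ip (ev j) x = x j := by
  simp [ip, ev, Pi.single_apply]

lemma ip_add_left (x y z : Fin l → ℚ) : ip (x + y) z = ip x z + ip y z := by
  simp [ip, add_mul, Finset.sum_add_distrib]

lemma ip_add_right (x y z : Fin l → ℚ) : ip x (y + z) = ip x y + ip x z := by
  simp [ip, mul_add, Finset.sum_add_distrib]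

lemma ip_sub_left (x y z : Fin l → ℚ) : ip (x - y) z = ip x z - ip y z := by
  simp [ip, sub_mul, Finset.sum_sub_distrib]

lemma ip_sub_right (x y z : Fin l → ℚ) : ip x (y - z) = ip x y - ip x z := by
  simp [ip, mul_sub, Finset.sum_sub_distrib]

lemma ip_neg_left (x y : Fin l → ℚ) : ip (-x) y = - ip x y := by
  simp [ip, Finset.sum_neg_distrib]

lemma ip_neg_right (x y : Fin l → ℚ) : ip x (-y) = - ip x y := by
  simp [ip]

lemma ip_smul_left (c : ℚ) (x y : Fin l → ℚ) : ip (c • x) y = c * ip x y := by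
  simp [ip, Finset.mul_sum, mul_assoc]

lemma ip_smul_right (c : ℚ) (x y : Fin l → ℚ) : ip x (c • y) = c * ip x y := by
  simp only [ip, Finset.mul_sum, Pi.smul_apply, smul_eq_mul]
  exact Finset.sum_congr rfl fun i _ => by ring

lemma ip_ev_ev (i j : Fin l) : ip (ev i) (ev j) = if i = j then 1 else 0 := by
  rw [ip_ev_left, ev, Pi.single_apply]

lemma ip_ev_ev_ne {i j : Fin l} (h : i ≠ j) : ip (ev i) (ev j) = 0 := by
  rw [ip_ev_ev, if_neg h]

lemma ip_ev_ev_self (i : Fin l) : ip (ev i) (ev i) = 1 := by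
  simp [ip_ev_ev]

end Aux

namespace Aux2
open Aux
variable {l : ℕ}

def reflL (α : Fin l → ℚ) : (Fin l → ℚ) →ₗ[ℚ] (Fin l → ℚ) where
  toFun x := x - ip x α • α
  map_add' x y := by show x + y - ip (x + y) α • α = (x - ip x α • α) + (y - ip y α • α); rw [ip_add_left, add_smul]; abel
  map_smul' c x := by simp only [RingHom.id_apply]; rw [ip_smul_left]; simp [mul_smul, smul_sub]

lemma reflL_invol (α : Fin l → ℚ) (h2 : ip α α = 2) : Function.Involutive (reflL α) := by
  intro x
  show reflL α (reflL α x) = x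
  simp only [reflL, LinearMap.coe_mk, AddHom.coe_mk]
  rw [ip_sub_left, ip_smul_left, h2]
  have : ip x α - ip x α * 2 = -(ip x α) := by ring
  rw [this, neg_smul]
  abel

def reflE (α : Fin l → ℚ) (h2 : ip α α = 2) : (Fin l → ℚ) ≃ₗ[ℚ] (Fin l → ℚ) :=
  LinearEquiv.ofInvolutive (reflL α) (reflL_invol α h2)

lemma reflE_apply (α : Fin l → ℚ) (h2 : ip α α = 2) (x : Fin l → ℚ) :
    reflE α h2 x = x - ip x α • α := rfl

end Aux2


namespace Main
open Aux Aux2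
variable {l : ℕ}

lemma nrm_sub {i j : Fin l} (h : i ≠ j) : ip (ev i - ev j) (ev i - ev j) = 2 := by
  rw [ip_sub_left, ip_sub_right, ip_sub_right, ip_ev_ev_self, ip_ev_ev_self,
    ip_ev_ev_ne h, ip_ev_ev_ne h.symm]
  norm_num

lemma nrm_add {i j : Fin l} (h : i ≠ j) : ip (ev i + ev j) (ev i + ev j) = 2 := by
  rw [ip_add_left, ip_add_right, ip_add_right, ip_ev_ev_self, ip_ev_ev_self,
    ip_ev_ev_ne h, ip_ev_ev_ne h.symm]
  norm_num

def sT (i j : Fin l) (h : i ≠ j) := reflE (ev i - ev j) (nrm_sub h)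
def sU (i j : Fin l) (h : i ≠ j) := reflE (ev i + ev j) (nrm_add h)

lemma sT_a (i j : Fin l) (h : i ≠ j) : sT i j h (ev i) = ev j := by
  rw [sT, reflE_apply, ip_sub_right, ip_ev_ev_self, ip_ev_ev_ne h]
  module

lemma sT_b (i j : Fin l) (h : i ≠ j) : sT i j h (ev j) = ev i := by
  rw [sT, reflE_apply, ip_sub_right, ip_ev_ev_self, ip_ev_ev_ne h.symm]
  module

lemma sT_c (i j : Fin l) (h : i ≠ j) {c : Fin l} (hci : c ≠ i) (hcj : c ≠ j) :
    sT i j h (ev c) = ev c := by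
  rw [sT, reflE_apply, ip_sub_right, ip_ev_ev_ne hci, ip_ev_ev_ne hcj]
  module

lemma sU_a (i j : Fin l) (h : i ≠ j) : sU i j h (ev i) = -ev j := by
  rw [sU, reflE_apply, ip_add_right, ip_ev_ev_self, ip_ev_ev_ne h]
  module

lemma sU_b (i j : Fin l) (h : i ≠ j) : sU i j h (ev j) = -ev i := by
  rw [sU, reflE_apply, ip_add_right, ip_ev_ev_self, ip_ev_ev_ne h.symm]
  module

lemma sU_c (i j : Fin l) (h : i ≠ j) {c : Fin l} (hci : c ≠ i) (hcj : c ≠ j) :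
    sU i j h (ev c) = ev c := by
  rw [sU, reflE_apply, ip_add_right, ip_ev_ev_ne hci, ip_ev_ev_ne hcj]
  module

end Main


namespace Main2
open Aux Aux2 Main
variable {l : ℕ}

lemma ip_delta (hl : 4 ≤ l) (x : Fin l → ℚ) :
    ip x (deltaD l hl) = x ⟨0, by omega⟩ + x ⟨1, by omega⟩ := by
  rw [deltaD, ip_add_right, ip_ev_right, ip_ev_right]

lemma ev_sub_mem_Phi (i j : Fin l) (h : i ≠ j) : ev i - ev j ∈ PhiD l := by
  rcases lt_or_gt_of_ne h with hlt | hgt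
  · exact ⟨i, j, hlt, Or.inr (Or.inl rfl)⟩
  · exact ⟨j, i, hgt, Or.inr (Or.inr (Or.inl (by module)))⟩

lemma ev_add_mem_Phi (i j : Fin l) (h : i ≠ j) : ev i + ev j ∈ PhiD l := by
  rcases lt_or_gt_of_ne h with hlt | hgt
  · exact ⟨i, j, hlt, Or.inl rfl⟩
  · exact ⟨j, i, hgt, Or.inl (by module)⟩

lemma sT_mem (hl : 4 ≤ l) {i j : Fin l} (h : i ≠ j) (hi : 2 ≤ i.val) (hj : 2 ≤ j.val) :
    sT i j h ∈ W0D l hl := by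
  apply Subgroup.subset_closure
  refine ⟨ev i - ev j, ⟨ev_sub_mem_Phi i j h, ?_⟩, fun x => ?_⟩
  · rw [ip_delta, Pi.sub_apply, Pi.sub_apply]
    rw [show (ev i : Fin l → ℚ) ⟨0, by omega⟩ = 0 from
        Pi.single_eq_of_ne (by exact fun hc => by simp [Fin.ext_iff] at hc; omega) 1]
    rw [show (ev i : Fin l → ℚ) ⟨1, by omega⟩ = 0 from
        Pi.single_eq_of_ne (by exact fun hc => by simp [Fin.ext_iff] at hc; omega) 1]
    rw [show (ev j : Fin l → ℚ) ⟨0, by omega⟩ = 0 from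
        Pi.single_eq_of_ne (by exact fun hc => by simp [Fin.ext_iff] at hc; omega) 1]
    rw [show (ev j : Fin l → ℚ) ⟨1, by omega⟩ = 0 from
        Pi.single_eq_of_ne (by exact fun hc => by simp [Fin.ext_iff] at hc; omega) 1]
    ring
  · rw [sT, reflE_apply, nrm_sub h]
    congr 1
    rw [show (2 : ℚ) * ip x (ev i - ev j) / 2 = ip x (ev i - ev j) by ring]

lemma sU_mem (hl : 4 ≤ l) {i j : Fin l} (h : i ≠ j) (hi : 2 ≤ i.val) (hj : 2 ≤ j.val) :
    sU i j h ∈ W0D l hl := by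
  apply Subgroup.subset_closure
  refine ⟨ev i + ev j, ⟨ev_add_mem_Phi i j h, ?_⟩, fun x => ?_⟩
  · rw [ip_delta, Pi.add_apply, Pi.add_apply]
    rw [show (ev i : Fin l → ℚ) ⟨0, by omega⟩ = 0 from
        Pi.single_eq_of_ne (by exact fun hc => by simp [Fin.ext_iff] at hc; omega) 1]
    rw [show (ev i : Fin l → ℚ) ⟨1, by omega⟩ = 0 from
        Pi.single_eq_of_ne (by exact fun hc => by simp [Fin.ext_iff] at hc; omega) 1]
    rw [show (ev j : Fin l → ℚ) ⟨0, by omega⟩ = 0 from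
        Pi.single_eq_of_ne (by exact fun hc => by simp [Fin.ext_iff] at hc; omega) 1]
    rw [show (ev j : Fin l → ℚ) ⟨1, by omega⟩ = 0 from
        Pi.single_eq_of_ne (by exact fun hc => by simp [Fin.ext_iff] at hc; omega) 1]
    ring
  · rw [sU, reflE_apply, nrm_add h]
    congr 1
    rw [show (2 : ℚ) * ip x (ev i + ev j) / 2 = ip x (ev i + ev j) by ring]

lemma swap01_mem (hl : 4 ≤ l) :
    sT (⟨0, by omega⟩ : Fin l) ⟨1, by omega⟩ (by simp [Fin.ext_iff]) ∈ W0D l hl := by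
  apply Subgroup.subset_closure
  have h01 : (⟨0, by omega⟩ : Fin l) ≠ ⟨1, by omega⟩ := by simp [Fin.ext_iff]
  refine ⟨ev ⟨0, by omega⟩ - ev ⟨1, by omega⟩, ⟨ev_sub_mem_Phi _ _ h01, ?_⟩, fun x => ?_⟩
  · rw [ip_delta, Pi.sub_apply, Pi.sub_apply]
    rw [show (ev (⟨0, by omega⟩ : Fin l) : Fin l → ℚ) ⟨0, by omega⟩ = 1 from Pi.single_eq_same _ _]
    rw [show (ev (⟨1, by omega⟩ : Fin l) : Fin l → ℚ) ⟨1, by omega⟩ = 1 from Pi.single_eq_same _ _]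
    rw [show (ev (⟨0, by omega⟩ : Fin l) : Fin l → ℚ) ⟨1, by omega⟩ = 0 from
        Pi.single_eq_of_ne (by simp [Fin.ext_iff]) 1]
    rw [show (ev (⟨1, by omega⟩ : Fin l) : Fin l → ℚ) ⟨0, by omega⟩ = 0 from
        Pi.single_eq_of_ne (by simp [Fin.ext_iff]) 1]
    ring
  · rw [sT, reflE_apply, nrm_sub h01]
    congr 1
    rw [show (2 : ℚ) * ip x _ / 2 = ip x _ by ring]

lemma orbit_refl (hl : 4 ≤ l) (S : Set (Fin l → ℚ)) : SameW0OrbitD l hl S S :=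
  ⟨1, one_mem _, by simp⟩

lemma orbit_step (hl : 4 ≤ l) {g : (Fin l → ℚ) ≃ₗ[ℚ] (Fin l → ℚ)} (hg : g ∈ W0D l hl)
    (S : Set (Fin l → ℚ)) : SameW0OrbitD l hl S ((fun x => g x) '' S) := ⟨g, hg, rfl⟩

lemma orbit_symm (hl : 4 ≤ l) {S T : Set (Fin l → ℚ)} (h : SameW0OrbitD l hl S T) :
    SameW0OrbitD l hl T S := by
  obtain ⟨w, hw, hws⟩ := h
  refine ⟨w⁻¹, inv_mem hw, ?_⟩
  rw [← hws, ← Set.image_comp]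
  convert Set.image_id S using 1
  ext x
  simp only [Set.mem_image, Function.comp_apply, show w⁻¹ = w.symm from rfl,
    LinearEquiv.symm_apply_apply, Set.image_id]
  exact ⟨fun ⟨y, hy, he⟩ => he ▸ hy, fun hx => ⟨x, hx, rfl⟩⟩

lemma orbit_trans (hl : 4 ≤ l) {S T U : Set (Fin l → ℚ)} (h1 : SameW0OrbitD l hl S T)
    (h2 : SameW0OrbitD l hl T U) : SameW0OrbitD l hl S U := by
  obtain ⟨w, hw, hws⟩ := h1
  obtain ⟨w', hw', hws'⟩ := h2
  exact ⟨w' * w, mul_mem hw' hw, by rw [← hws', ← hws, ← Set.image_comp]; rfl⟩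

end Main2


namespace Main3
open Aux Aux2 Main Main2
variable {l : ℕ}

lemma root_shape {v : Fin l → ℚ} (hv : v ∈ PhiD l) :
    ∃ (i j : Fin l) (σ τ : ℚ), i < j ∧ (σ = 1 ∨ σ = -1) ∧ (τ = 1 ∨ τ = -1) ∧
      v = σ • ev i + τ • ev j := by
  obtain ⟨i, j, hij, h | h | h | h⟩ := hv
  · exact ⟨i, j, 1, 1, hij, Or.inl rfl, Or.inl rfl, by rw [h]; module⟩
  · exact ⟨i, j, 1, -1, hij, Or.inl rfl, Or.inr rfl, by rw [h]; module⟩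
  · exact ⟨i, j, -1, 1, hij, Or.inr rfl, Or.inl rfl, by rw [h]; module⟩
  · exact ⟨i, j, -1, -1, hij, Or.inr rfl, Or.inr rfl, by rw [h]; module⟩

lemma coord (σ τ : ℚ) (i j c : Fin l) :
    (σ • ev i + τ • ev j) c = σ * (if c = i then 1 else 0) + τ * (if c = j then 1 else 0) := by
  simp [ev, Pi.single_apply]

lemma Phi1_struct (hl : 4 ≤ l) {v : Fin l → ℚ} (hv : v ∈ Phi1D l hl) :
    ∃ (a k : Fin l) (ε : ℚ), ((a : ℕ) = 0 ∨ (a : ℕ) = 1) ∧ 2 ≤ (k : ℕ) ∧ (ε = 1 ∨ ε = -1) ∧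
      v = ev a + ε • ev k := by
  obtain ⟨hΦ, hδ⟩ := hv
  obtain ⟨i, j, σ, τ, hij, hσ, hτ, rfl⟩ := root_shape hΦ
  rw [ip_delta, coord, coord] at hδ
  have hij' : (i : ℕ) < (j : ℕ) := hij
  by_cases hi0 : (i : ℕ) = 0
  · by_cases hj1 : (j : ℕ) = 1
    · exfalso
      rw [if_pos (Fin.ext (show (0 : ℕ) = (i : ℕ) by omega)),
        if_neg (Fin.ne_of_val_ne (show (0 : ℕ) ≠ (j : ℕ) by omega)),
        if_neg (Fin.ne_of_val_ne (show (1 : ℕ) ≠ (i : ℕ) by omega)),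
        if_pos (Fin.ext (show (1 : ℕ) = (j : ℕ) by omega))] at hδ
      rcases hσ with rfl | rfl <;> rcases hτ with rfl | rfl <;> norm_num at hδ
    · have hj2 : 2 ≤ (j : ℕ) := by omega
      rw [if_pos (Fin.ext (show (0 : ℕ) = (i : ℕ) by omega)),
        if_neg (Fin.ne_of_val_ne (show (0 : ℕ) ≠ (j : ℕ) by omega)),
        if_neg (Fin.ne_of_val_ne (show (1 : ℕ) ≠ (i : ℕ) by omega)),
        if_neg (Fin.ne_of_val_ne (show (1 : ℕ) ≠ (j : ℕ) by omega))] at hδ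
      rcases hσ with rfl | rfl
      · exact ⟨i, j, τ, Or.inl hi0, hj2, hτ, by module⟩
      · norm_num at hδ
  · by_cases hi1 : (i : ℕ) = 1
    · have hj2 : 2 ≤ (j : ℕ) := by omega
      rw [if_neg (Fin.ne_of_val_ne (show (0 : ℕ) ≠ (i : ℕ) by omega)),
        if_neg (Fin.ne_of_val_ne (show (0 : ℕ) ≠ (j : ℕ) by omega)),
        if_pos (Fin.ext (show (1 : ℕ) = (i : ℕ) by omega)),
        if_neg (Fin.ne_of_val_ne (show (1 : ℕ) ≠ (j : ℕ) by omega))] at hδ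
      rcases hσ with rfl | rfl
      · exact ⟨i, j, τ, Or.inr hi1, hj2, hτ, by module⟩
      · norm_num at hδ
    · exfalso
      have hi2 : 2 ≤ (i : ℕ) := by omega
      rw [if_neg (Fin.ne_of_val_ne (show (0 : ℕ) ≠ (i : ℕ) by omega)),
        if_neg (Fin.ne_of_val_ne (show (0 : ℕ) ≠ (j : ℕ) by omega)),
        if_neg (Fin.ne_of_val_ne (show (1 : ℕ) ≠ (i : ℕ) by omega)),
        if_neg (Fin.ne_of_val_ne (show (1 : ℕ) ≠ (j : ℕ) by omega))] at hδ
      norm_num at hδ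

lemma Phi0_struct (hl : 4 ≤ l) {α : Fin l → ℚ} (hα : α ∈ Phi0D l hl) :
    (α ⟨0, by omega⟩ = 0 ∧ α ⟨1, by omega⟩ = 0) ∨
      ∃ σ : ℚ, (σ = 1 ∨ σ = -1) ∧ α = σ • (ev ⟨0, by omega⟩ - ev (⟨1, by omega⟩ : Fin l)) := by
  obtain ⟨hΦ, hδ⟩ := hα
  obtain ⟨i, j, σ, τ, hij, hσ, hτ, rfl⟩ := root_shape hΦ
  rw [ip_delta, coord, coord] at hδ
  have hij' : (i : ℕ) < (j : ℕ) := hij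
  by_cases hi0 : (i : ℕ) = 0
  · by_cases hj1 : (j : ℕ) = 1
    · right
      have hi : i = ⟨0, by omega⟩ := Fin.ext (show (i : ℕ) = (0 : ℕ) by omega)
      have hj : j = ⟨1, by omega⟩ := Fin.ext (show (j : ℕ) = (1 : ℕ) by omega)
      rw [if_pos (Fin.ext (show (0 : ℕ) = (i : ℕ) by omega)),
        if_neg (Fin.ne_of_val_ne (show (0 : ℕ) ≠ (j : ℕ) by omega)),
        if_neg (Fin.ne_of_val_ne (show (1 : ℕ) ≠ (i : ℕ) by omega)),
        if_pos (Fin.ext (show (1 : ℕ) = (j : ℕ) by omega))] at hδ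
      refine ⟨σ, hσ, ?_⟩
      have hτσ : τ = -σ := by linarith [hδ]
      rw [hi, hj, hτσ]
      module
    · exfalso
      rw [if_pos (Fin.ext (show (0 : ℕ) = (i : ℕ) by omega)),
        if_neg (Fin.ne_of_val_ne (show (0 : ℕ) ≠ (j : ℕ) by omega)),
        if_neg (Fin.ne_of_val_ne (show (1 : ℕ) ≠ (i : ℕ) by omega)),
        if_neg (Fin.ne_of_val_ne (show (1 : ℕ) ≠ (j : ℕ) by omega))] at hδ
      rcases hσ with rfl | rfl <;> norm_num at hδ
  · by_cases hi1 : (i : ℕ) = 1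
    · exfalso
      rw [if_neg (Fin.ne_of_val_ne (show (0 : ℕ) ≠ (i : ℕ) by omega)),
        if_neg (Fin.ne_of_val_ne (show (0 : ℕ) ≠ (j : ℕ) by omega)),
        if_pos (Fin.ext (show (1 : ℕ) = (i : ℕ) by omega)),
        if_neg (Fin.ne_of_val_ne (show (1 : ℕ) ≠ (j : ℕ) by omega))] at hδ
      rcases hσ with rfl | rfl <;> norm_num at hδ
    · left
      refine ⟨?_, ?_⟩
      · rw [coord, if_neg (Fin.ne_of_val_ne (show (0 : ℕ) ≠ (i : ℕ) by omega)),
          if_neg (Fin.ne_of_val_ne (show (0 : ℕ) ≠ (j : ℕ) by omega))]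
        ring
      · rw [coord, if_neg (Fin.ne_of_val_ne (show (1 : ℕ) ≠ (i : ℕ) by omega)),
          if_neg (Fin.ne_of_val_ne (show (1 : ℕ) ≠ (j : ℕ) by omega))]
        ring
  end Main3



namespace Main4
open Aux Aux2 Main Main2 Main3
variable {l : ℕ}

lemma W0_block (hl : 4 ≤ l) {w : (Fin l → ℚ) ≃ₗ[ℚ] (Fin l → ℚ)} (hw : w ∈ W0D l hl) :
    ∀ v : Fin l → ℚ,
      ((w v) ⟨0, by omega⟩ = v ⟨0, by omega⟩ ∧ (w v) ⟨1, by omega⟩ = v ⟨1, by omega⟩) ∨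
      ((w v) ⟨0, by omega⟩ = v ⟨1, by omega⟩ ∧ (w v) ⟨1, by omega⟩ = v ⟨0, by omega⟩) := by
  refine Subgroup.closure_induction (fun g hg => ?_) (fun v => Or.inl ⟨rfl, rfl⟩)
    (fun x y hx hy px py v => ?_) (fun x hx px v => ?_) hw
  · -- generator case
    obtain ⟨α, hα, hgx⟩ := hg
    intro v
    rcases Phi0_struct hl hα with ⟨h0, h1⟩ | ⟨σ, hσ, rfl⟩
    · left
      constructor <;> (rw [hgx v]; simp [Pi.sub_apply, Pi.smul_apply, h0, h1])
    · right
      have h01 : (⟨0, by omega⟩ : Fin l) ≠ ⟨1, by omega⟩ :=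
        Fin.ne_of_val_ne (show (0 : ℕ) ≠ (1 : ℕ) by norm_num)
      have hαα : ip (σ • (ev (⟨0, by omega⟩ : Fin l) - ev ⟨1, by omega⟩))
          (σ • (ev (⟨0, by omega⟩ : Fin l) - ev ⟨1, by omega⟩)) = σ * σ * 2 := by
        rw [ip_smul_left, ip_smul_right, nrm_sub h01]; ring
      have hipv : ip v (σ • (ev (⟨0, by omega⟩ : Fin l) - ev ⟨1, by omega⟩)) =
          σ * (v ⟨0, by omega⟩ - v ⟨1, by omega⟩) := by
        rw [ip_smul_right, ip_sub_right, ip_ev_right, ip_ev_right]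
      have c00 : ((σ • (ev (⟨0, by omega⟩ : Fin l) - ev ⟨1, by omega⟩) : Fin l → ℚ))
          ⟨0, by omega⟩ = σ := by
        simp [ev, Pi.single_apply, Fin.ext_iff]
      have c11 : ((σ • (ev (⟨0, by omega⟩ : Fin l) - ev ⟨1, by omega⟩) : Fin l → ℚ))
          ⟨1, by omega⟩ = -σ := by
        simp [ev, Pi.single_apply, Fin.ext_iff]
      refine ⟨?_, ?_⟩
      · rw [hgx v, Pi.sub_apply, Pi.smul_apply, hαα, hipv, c00]
        rcases hσ with rfl | rfl <;> (simp only [smul_eq_mul]; ring)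
      · rw [hgx v, Pi.sub_apply, Pi.smul_apply, hαα, hipv, c11]
        rcases hσ with rfl | rfl <;> (simp only [smul_eq_mul]; ring)
  · rcases px (y v) with ⟨g1, g2⟩ | ⟨g1, g2⟩ <;> rcases py v with ⟨h1, h2⟩ | ⟨h1, h2⟩
    · exact Or.inl ⟨g1.trans h1, g2.trans h2⟩
    · exact Or.inr ⟨g1.trans h1, g2.trans h2⟩
    · exact Or.inr ⟨g1.trans h2, g2.trans h1⟩
    · exact Or.inl ⟨g1.trans h2, g2.trans h1⟩
  · have key : x (x⁻¹ v) = v := by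
      rw [show x⁻¹ = x.symm from rfl]; exact x.apply_symm_apply v
    rcases px (x⁻¹ v) with ⟨h1, h2⟩ | ⟨h1, h2⟩
    · rw [key] at h1 h2
      exact Or.inl ⟨h1.symm, h2.symm⟩
    · rw [key] at h1 h2
      exact Or.inr ⟨h2.symm, h1.symm⟩

lemma ip_pair (a k b m : Fin l) (ε τ : ℚ) (ham : a ≠ m) (hbk : b ≠ k) :
    ip (ev a + ε • ev k) (ev b + τ • ev m) =
      (if a = b then 1 else 0) + ε * τ * (if k = m then 1 else 0) := by
  simp only [ip_add_left, ip_add_right, ip_smul_left, ip_smul_right, ip_ev_ev]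
  rw [if_neg ham, if_neg hbk.symm]
  ring

lemma pair_classify (hl : 4 ≤ l) {S : Set (Fin l → ℚ)} (hS : S ∈ OrthPairsD l hl) :
    (∃ (a k : Fin l), ((a : ℕ) = 0 ∨ (a : ℕ) = 1) ∧ 2 ≤ (k : ℕ) ∧
        S = {ev a + ev k, ev a - ev k}) ∨
    (∃ (k m : Fin l) (ε τ : ℚ), 2 ≤ (k : ℕ) ∧ 2 ≤ (m : ℕ) ∧ k ≠ m ∧
        (ε = 1 ∨ ε = -1) ∧ (τ = 1 ∨ τ = -1) ∧
        S = {ev ⟨0, by omega⟩ + ε • ev k, ev ⟨1, by omega⟩ + τ • ev m}) := by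
  obtain ⟨hsub, hcard, horth⟩ := hS
  obtain ⟨α, β, hne, rfl⟩ := Set.ncard_eq_two.mp hcard
  obtain ⟨a, k, ε, ha, hk, hε, rfl⟩ :=
    Phi1_struct hl (hsub (Set.mem_insert _ _))
  obtain ⟨b, m, τ, hb, hm, hτ, rfl⟩ :=
    Phi1_struct hl (hsub (Set.mem_insert_of_mem _ (Set.mem_singleton _)))
  have hip : ip (ev a + ε • ev k) (ev b + τ • ev m) = 0 :=
    horth _ (Set.mem_insert _ _) _ (Set.mem_insert_of_mem _ (Set.mem_singleton _)) hne
  rw [ip_pair a k b m ε τ (Fin.ne_of_val_ne (by omega)) (Fin.ne_of_val_ne (by omega))] at hip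
  by_cases hab : a = b
  · -- same head: forces k = m and opposite signs
    subst hab
    rw [if_pos rfl] at hip
    by_cases hkm : k = m
    · subst hkm
      rw [if_pos rfl] at hip
      left
      rcases hε with rfl | rfl <;> rcases hτ with rfl | rfl
      · norm_num at hip
      · exact ⟨a, k, ha, hk, by rw [one_smul, show ev a + (-1 : ℚ) • ev k = ev a - ev k by module]⟩
      · refine ⟨a, k, ha, hk, ?_⟩
        rw [one_smul, show ev a + (-1 : ℚ) • ev k = ev a - ev k by module, Set.pair_comm]
      · norm_num at hip
    · rw [if_neg hkm] at hip
      norm_num at hip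
  · -- different heads: k ≠ m
    have hab' : (a : ℕ) ≠ (b : ℕ) := fun h => hab (Fin.ext h)
    rw [if_neg hab] at hip
    have hkm : k ≠ m := by
      intro h
      rw [if_pos h] at hip
      rcases hε with rfl | rfl <;> rcases hτ with rfl | rfl <;> norm_num at hip
    right
    rcases ha with ha0 | ha1
    · have hb1 : (b : ℕ) = 1 := by omega
      have e1 : a = ⟨0, by omega⟩ := Fin.ext (show (a : ℕ) = (0 : ℕ) by omega)
      have e2 : b = ⟨1, by omega⟩ := Fin.ext (show (b : ℕ) = (1 : ℕ) by omega)
      exact ⟨k, m, ε, τ, hk, hm, hkm, hε, hτ, by rw [e1, e2]⟩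
    · have hb0 : (b : ℕ) = 0 := by omega
      have e1 : a = ⟨1, by omega⟩ := Fin.ext (show (a : ℕ) = (1 : ℕ) by omega)
      have e2 : b = ⟨0, by omega⟩ := Fin.ext (show (b : ℕ) = (0 : ℕ) by omega)
      exact ⟨m, k, τ, ε, hm, hk, hkm.symm, hτ, hε, by rw [e1, e2, Set.pair_comm]⟩

end Main4


namespace Main5
open Aux Aux2 Main Main2 Main3 Main4
variable {l : ℕ}

lemma orbit_step' (hl : 4 ≤ l) {g : (Fin l → ℚ) ≃ₗ[ℚ] (Fin l → ℚ)} (hg : g ∈ W0D l hl)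
    {u1 u2 w1 w2 : Fin l → ℚ} (h1 : g u1 = w1) (h2 : g u2 = w2) :
    SameW0OrbitD l hl {u1, u2} {w1, w2} := by
  have := orbit_step hl hg {u1, u2}
  rwa [Set.image_pair, h1, h2] at this

def sC (i j : Fin l) (h : i ≠ j) := sT i j h * sU i j h

lemma sC_mem (hl : 4 ≤ l) {i j : Fin l} (h : i ≠ j) (hi : 2 ≤ (i : ℕ)) (hj : 2 ≤ (j : ℕ)) :
    sC i j h ∈ W0D l hl := mul_mem (sT_mem hl h hi hj) (sU_mem hl h hi hj)

lemma sC_a (i j : Fin l) (h : i ≠ j) : sC i j h (ev i) = -(ev i) := by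
  show sT i j h (sU i j h (ev i)) = _
  rw [sU_a, map_neg, sT_b]

lemma sC_b (i j : Fin l) (h : i ≠ j) : sC i j h (ev j) = -(ev j) := by
  show sT i j h (sU i j h (ev j)) = _
  rw [sU_b, map_neg, sT_a]

lemma sC_c (i j : Fin l) (h : i ≠ j) {c : Fin l} (hci : c ≠ i) (hcj : c ≠ j) :
    sC i j h (ev c) = ev c := by
  show sT i j h (sU i j h (ev c)) = _
  rw [sU_c i j h hci hcj, sT_c i j h hci hcj]

lemma typeI (hl : 4 ≤ l) (a k : Fin l) (ha : (a : ℕ) = 0 ∨ (a : ℕ) = 1) (hk : 2 ≤ (k : ℕ)) :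
    SameW0OrbitD l hl
      {ev ⟨0, by omega⟩ + ev ⟨2, by omega⟩, ev (⟨0, by omega⟩ : Fin l) - ev ⟨2, by omega⟩}
      {ev a + ev k, ev a - ev k} := by
  have h01 : (⟨0, by omega⟩ : Fin l) ≠ ⟨1, by omega⟩ := Fin.ne_of_val_ne (by norm_num)
  have step2 : SameW0OrbitD l hl
      {ev ⟨0, by omega⟩ + ev ⟨2, by omega⟩, ev (⟨0, by omega⟩ : Fin l) - ev ⟨2, by omega⟩}
      {ev ⟨0, by omega⟩ + ev k, ev (⟨0, by omega⟩ : Fin l) - ev k} := by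
    by_cases hk2 : k = ⟨2, by omega⟩
    · rw [hk2]; exact orbit_refl hl _
    · have h2k : (⟨2, by omega⟩ : Fin l) ≠ k := Ne.symm hk2
      refine orbit_step' hl (sT_mem hl h2k (by norm_num) hk) ?_ ?_
      · rw [map_add, sT_a,
          sT_c _ _ h2k (Fin.ne_of_val_ne (show (0 : ℕ) ≠ 2 by norm_num))
            (Fin.ne_of_val_ne (show (0 : ℕ) ≠ (k : ℕ) by omega))]
      · rw [map_sub, sT_a,
          sT_c _ _ h2k (Fin.ne_of_val_ne (show (0 : ℕ) ≠ 2 by norm_num))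
            (Fin.ne_of_val_ne (show (0 : ℕ) ≠ (k : ℕ) by omega))]
  rcases ha with ha | ha
  · rw [show a = ⟨0, by omega⟩ from Fin.ext (show (a : ℕ) = (0 : ℕ) by omega)]
    exact step2
  · rw [show a = ⟨1, by omega⟩ from Fin.ext (show (a : ℕ) = (1 : ℕ) by omega)]
    refine orbit_trans hl step2 (orbit_step' hl (swap01_mem hl) ?_ ?_)
    · rw [map_add, sT_a,
        sT_c _ _ h01 (Fin.ne_of_val_ne (show (k : ℕ) ≠ 0 by omega))
          (Fin.ne_of_val_ne (show (k : ℕ) ≠ 1 by omega))]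
    · rw [map_sub, sT_a,
        sT_c _ _ h01 (Fin.ne_of_val_ne (show (k : ℕ) ≠ 0 by omega))
          (Fin.ne_of_val_ne (show (k : ℕ) ≠ 1 by omega))]

lemma posm (hl : 4 ≤ l) (m : Fin l) (hm : 2 ≤ (m : ℕ)) (hm2 : m ≠ ⟨2, by omega⟩) :
    SameW0OrbitD l hl
      {ev ⟨0, by omega⟩ + ev ⟨2, by omega⟩, ev (⟨1, by omega⟩ : Fin l) + ev ⟨3, by omega⟩}
      {ev ⟨0, by omega⟩ + ev ⟨2, by omega⟩, ev (⟨1, by omega⟩ : Fin l) + ev m} := by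
  have h2m : (⟨2, by omega⟩ : Fin l) ≠ m := Ne.symm hm2
  by_cases hm3 : m = ⟨3, by omega⟩
  · rw [hm3]; exact orbit_refl hl _
  · have h3m : (⟨3, by omega⟩ : Fin l) ≠ m := Ne.symm hm3
    refine orbit_step' hl (sT_mem hl h3m (by norm_num) hm) ?_ ?_
    · rw [map_add,
        sT_c _ _ h3m (Fin.ne_of_val_ne (show (0 : ℕ) ≠ 3 by norm_num))
          (Fin.ne_of_val_ne (show (0 : ℕ) ≠ (m : ℕ) by omega)),
        sT_c _ _ h3m (Fin.ne_of_val_ne (show (2 : ℕ) ≠ 3 by norm_num)) h2m]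
    · rw [map_add, sT_a,
        sT_c _ _ h3m (Fin.ne_of_val_ne (show (1 : ℕ) ≠ 3 by norm_num))
          (Fin.ne_of_val_ne (show (1 : ℕ) ≠ (m : ℕ) by omega))]

lemma typeII (hl : 4 ≤ l) (hl5 : 5 ≤ l) (k m : Fin l) (ε τ : ℚ) (hk : 2 ≤ (k : ℕ))
    (hm : 2 ≤ (m : ℕ)) (hkm : k ≠ m) (hε : ε = 1 ∨ ε = -1) (hτ : τ = 1 ∨ τ = -1) :
    SameW0OrbitD l hl
      {ev ⟨0, by omega⟩ + ev ⟨2, by omega⟩, ev (⟨1, by omega⟩ : Fin l) + ev ⟨3, by omega⟩}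
      {ev ⟨0, by omega⟩ + ε • ev k, ev (⟨1, by omega⟩ : Fin l) + τ • ev m} := by
  have hkm' : (k : ℕ) ≠ (m : ℕ) := fun h => hkm (Fin.ext h)
  have phase1 : SameW0OrbitD l hl
      {ev ⟨0, by omega⟩ + ev ⟨2, by omega⟩, ev (⟨1, by omega⟩ : Fin l) + ev ⟨3, by omega⟩}
      {ev ⟨0, by omega⟩ + ev k, ev (⟨1, by omega⟩ : Fin l) + ev m} := by
    by_cases hk2 : k = ⟨2, by omega⟩
    · rw [hk2]
      exact posm hl m hm (fun hc => hkm (hk2.trans hc.symm))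
    · have h2k : (⟨2, by omega⟩ : Fin l) ≠ k := Ne.symm hk2
      by_cases hm2 : m = ⟨2, by omega⟩
      · refine orbit_trans hl (posm hl k hk hk2) ?_
        rw [hm2]
        refine orbit_step' hl (sT_mem hl h2k (by norm_num) hk) ?_ ?_
        · rw [map_add, sT_a,
            sT_c _ _ h2k (Fin.ne_of_val_ne (show (0 : ℕ) ≠ 2 by norm_num))
              (Fin.ne_of_val_ne (show (0 : ℕ) ≠ (k : ℕ) by omega))]
        · rw [map_add, sT_b,
            sT_c _ _ h2k (Fin.ne_of_val_ne (show (1 : ℕ) ≠ 2 by norm_num))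
              (Fin.ne_of_val_ne (show (1 : ℕ) ≠ (k : ℕ) by omega))]
      · refine orbit_trans hl (posm hl m hm hm2) ?_
        refine orbit_step' hl (sT_mem hl h2k (by norm_num) hk) ?_ ?_
        · rw [map_add, sT_a,
            sT_c _ _ h2k (Fin.ne_of_val_ne (show (0 : ℕ) ≠ 2 by norm_num))
              (Fin.ne_of_val_ne (show (0 : ℕ) ≠ (k : ℕ) by omega))]
        · rw [map_add,
            sT_c _ _ h2k (Fin.ne_of_val_ne (show (1 : ℕ) ≠ 2 by norm_num))
              (Fin.ne_of_val_ne (show (1 : ℕ) ≠ (k : ℕ) by omega)),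
            sT_c _ _ h2k (show m ≠ ⟨2, by omega⟩ from hm2) (show m ≠ k from Ne.symm hkm)]
  refine orbit_trans hl phase1 ?_
  -- find a spare index p
  obtain ⟨pv, hpv2, hpvl, hpvk, hpvm⟩ :
      ∃ pv : ℕ, 2 ≤ pv ∧ pv < l ∧ pv ≠ (k : ℕ) ∧ pv ≠ (m : ℕ) := by
    by_cases c2 : (k : ℕ) ≠ 2 ∧ (m : ℕ) ≠ 2
    · obtain ⟨c2k, c2m⟩ := c2
      exact ⟨2, by omega, by omega, by omega, by omega⟩
    · push_neg at c2
      by_cases c3 : (k : ℕ) ≠ 3 ∧ (m : ℕ) ≠ 3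
      · obtain ⟨c3k, c3m⟩ := c3
        exact ⟨3, by omega, by omega, by omega, by omega⟩
      · push_neg at c3
        by_cases ck2 : (k : ℕ) = 2 <;> by_cases cm2 : (m : ℕ) = 2 <;>
          by_cases ck3 : (k : ℕ) = 3 <;> by_cases cm3 : (m : ℕ) = 3 <;>
          exact ⟨4, by omega, by omega, by omega, by omega⟩
  set p : Fin l := ⟨pv, hpvl⟩ with hp
  have hpk : p ≠ k := Fin.ne_of_val_ne (show pv ≠ (k : ℕ) from hpvk)
  have hpm : p ≠ m := Fin.ne_of_val_ne (show pv ≠ (m : ℕ) from hpvm)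
  have h0k : (⟨0, by omega⟩ : Fin l) ≠ k := Fin.ne_of_val_ne (show (0 : ℕ) ≠ (k : ℕ) by omega)
  have h0m : (⟨0, by omega⟩ : Fin l) ≠ m := Fin.ne_of_val_ne (show (0 : ℕ) ≠ (m : ℕ) by omega)
  have h0p : (⟨0, by omega⟩ : Fin l) ≠ p := Fin.ne_of_val_ne (show (0 : ℕ) ≠ pv by omega)
  have h1k : (⟨1, by omega⟩ : Fin l) ≠ k := Fin.ne_of_val_ne (show (1 : ℕ) ≠ (k : ℕ) by omega)
  have h1m : (⟨1, by omega⟩ : Fin l) ≠ m := Fin.ne_of_val_ne (show (1 : ℕ) ≠ (m : ℕ) by omega)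
  have h1p : (⟨1, by omega⟩ : Fin l) ≠ p := Fin.ne_of_val_ne (show (1 : ℕ) ≠ pv by omega)
  rcases hε with rfl | rfl <;> rcases hτ with rfl | rfl
  · rw [one_smul, one_smul]; exact orbit_refl hl _
  · -- ε = 1, τ = -1 : sign change at m, p
    rw [one_smul, show ev (⟨1, by omega⟩ : Fin l) + (-1 : ℚ) • ev m = ev ⟨1, by omega⟩ - ev m
      from by module]
    have hmp : m ≠ p := hpm.symm
    refine orbit_step' hl (sC_mem hl hmp hm hpv2) ?_ ?_
    · rw [map_add, sC_c _ _ hmp h0m h0p, sC_c _ _ hmp hkm (show k ≠ p from Ne.symm hpk)]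
    · rw [map_add, sC_c _ _ hmp h1m h1p, sC_a]
      abel
  · -- ε = -1, τ = 1 : sign change at k, p
    rw [one_smul, show ev (⟨0, by omega⟩ : Fin l) + (-1 : ℚ) • ev k = ev ⟨0, by omega⟩ - ev k
      from by module]
    have hkp : k ≠ p := hpk.symm
    refine orbit_step' hl (sC_mem hl hkp hk hpv2) ?_ ?_
    · rw [map_add, sC_c _ _ hkp h0k h0p, sC_a]
      abel
    · rw [map_add, sC_c _ _ hkp h1k h1p,
        sC_c _ _ hkp (show m ≠ k from Ne.symm hkm) (show m ≠ p from Ne.symm hpm)]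
  · -- ε = -1, τ = -1 : sign change at k, m
    rw [show ev (⟨0, by omega⟩ : Fin l) + (-1 : ℚ) • ev k = ev ⟨0, by omega⟩ - ev k
        from by module,
      show ev (⟨1, by omega⟩ : Fin l) + (-1 : ℚ) • ev m = ev ⟨1, by omega⟩ - ev m
        from by module]
    refine orbit_step' hl (sC_mem hl hkm hk hm) ?_ ?_
    · rw [map_add, sC_c _ _ hkm h0k h0m, sC_a]
      abel
    · rw [map_add, sC_c _ _ hkm h1k h1m, sC_b]
      abel

lemma notequiv (hl : 4 ≤ l) :
    ¬ SameW0OrbitD l hl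
      {ev ⟨0, by omega⟩ + ev ⟨2, by omega⟩, ev (⟨0, by omega⟩ : Fin l) - ev ⟨2, by omega⟩}
      {ev ⟨0, by omega⟩ + ev ⟨2, by omega⟩, ev (⟨1, by omega⟩ : Fin l) + ev ⟨3, by omega⟩} := by
  rintro ⟨w, hw, him⟩
  rw [Set.image_pair] at him
  have hsum : w ((ev ⟨0, by omega⟩ + ev ⟨2, by omega⟩) +
      (ev (⟨0, by omega⟩ : Fin l) - ev ⟨2, by omega⟩)) =
      (ev ⟨0, by omega⟩ + ev ⟨2, by omega⟩) + (ev (⟨1, by omega⟩ : Fin l) + ev ⟨3, by omega⟩) := by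
    rcases Set.pair_eq_pair_iff.mp him with ⟨h1, h2⟩ | ⟨h1, h2⟩
    · rw [map_add, h1, h2]
    · rw [map_add, h1, h2]; abel
  have hc1 : (((ev ⟨0, by omega⟩ + ev ⟨2, by omega⟩) +
      (ev (⟨0, by omega⟩ : Fin l) - ev ⟨2, by omega⟩) : Fin l → ℚ)) ⟨1, by omega⟩ = 0 := by
    norm_num [ev, Pi.single_apply, Fin.ext_iff]
  have hc0 : (((ev ⟨0, by omega⟩ + ev ⟨2, by omega⟩) +
      (ev (⟨0, by omega⟩ : Fin l) - ev ⟨2, by omega⟩) : Fin l → ℚ)) ⟨0, by omega⟩ = 2 := by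
    norm_num [ev, Pi.single_apply, Fin.ext_iff]
  have hr1 : (((ev ⟨0, by omega⟩ + ev ⟨2, by omega⟩) +
      (ev (⟨1, by omega⟩ : Fin l) + ev ⟨3, by omega⟩) : Fin l → ℚ)) ⟨1, by omega⟩ = 1 := by
    norm_num [ev, Pi.single_apply, Fin.ext_iff]
  have hw1 := congrFun hsum (⟨1, by omega⟩ : Fin l)
  rcases W0_block hl hw ((ev ⟨0, by omega⟩ + ev ⟨2, by omega⟩) +
      (ev (⟨0, by omega⟩ : Fin l) - ev ⟨2, by omega⟩)) with ⟨e0, e1⟩ | ⟨e0, e1⟩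
  · rw [hw1, hr1] at e1
    rw [hc1] at e1
    norm_num at e1
  · rw [hw1, hr1] at e1
    rw [hc0] at e1
    norm_num at e1
end Main5


open Aux Aux2 Main Main2 Main3 Main4 Main5 in
/-- For `D_l`, `l ≥ 5`, the action of `W₀` on 2-element orthogonal
subsets of `Φ₁` has exactly two orbits: there are two non-equivalent such subsets,
and every such subset is equivalent to one of them. -/
theorem W0_two_orbits_on_orthogonal_pairs_Dl (l : ℕ) (hl5 : 5 ≤ l) (hl : 4 ≤ l) :
    ∃ A B : Set (Fin l → ℚ),
      A ∈ OrthPairsD l hl ∧ B ∈ OrthPairsD l hl ∧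
      ¬ SameW0OrbitD l hl A B ∧
      ∀ S ∈ OrthPairsD l hl,
        SameW0OrbitD l hl A S ∨ SameW0OrbitD l hl B S := by
  classical
  refine ⟨{ev ⟨0, by omega⟩ + ev ⟨2, by omega⟩, ev (⟨0, by omega⟩ : Fin l) - ev ⟨2, by omega⟩},
    {ev ⟨0, by omega⟩ + ev ⟨2, by omega⟩, ev (⟨1, by omega⟩ : Fin l) + ev ⟨3, by omega⟩},
    ?_, ?_, notequiv hl, ?_⟩
  · refine ⟨?_, ?_, ?_⟩
    · intro x hx
      simp only [Set.mem_insert_iff, Set.mem_singleton_iff] at hx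
      rcases hx with rfl | rfl
      · exact ⟨⟨⟨0, by omega⟩, ⟨2, by omega⟩, Fin.mk_lt_mk.mpr (by norm_num), Or.inl rfl⟩,
          by rw [ip_delta]; norm_num [ev, Pi.single_apply, Fin.ext_iff]⟩
      · exact ⟨⟨⟨0, by omega⟩, ⟨2, by omega⟩, Fin.mk_lt_mk.mpr (by norm_num),
          Or.inr (Or.inl rfl)⟩,
          by rw [ip_delta]; norm_num [ev, Pi.single_apply, Fin.ext_iff]⟩
    · refine Set.ncard_pair ?_
      intro h
      have := congrFun h ⟨2, by omega⟩
      norm_num [ev, Pi.single_apply, Fin.ext_iff] at this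
    · intro α hα β hβ hab
      simp only [Set.mem_insert_iff, Set.mem_singleton_iff] at hα hβ
      rcases hα with rfl | rfl <;> rcases hβ with rfl | rfl
      · exact absurd rfl hab
      · norm_num [ip_add_left, ip_add_right, ip_sub_left, ip_sub_right, ip_ev_ev, Fin.ext_iff]
      · norm_num [ip_add_left, ip_add_right, ip_sub_left, ip_sub_right, ip_ev_ev, Fin.ext_iff]
      · exact absurd rfl hab
  · refine ⟨?_, ?_, ?_⟩
    · intro x hx
      simp only [Set.mem_insert_iff, Set.mem_singleton_iff] at hx
      rcases hx with rfl | rfl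
      · exact ⟨⟨⟨0, by omega⟩, ⟨2, by omega⟩, Fin.mk_lt_mk.mpr (by norm_num), Or.inl rfl⟩,
          by rw [ip_delta]; norm_num [ev, Pi.single_apply, Fin.ext_iff]⟩
      · exact ⟨⟨⟨1, by omega⟩, ⟨3, by omega⟩, Fin.mk_lt_mk.mpr (by norm_num), Or.inl rfl⟩,
          by rw [ip_delta]; norm_num [ev, Pi.single_apply, Fin.ext_iff]⟩
    · refine Set.ncard_pair ?_
      intro h
      have := congrFun h ⟨0, by omega⟩
      norm_num [ev, Pi.single_apply, Fin.ext_iff] at this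
    · intro α hα β hβ hab
      simp only [Set.mem_insert_iff, Set.mem_singleton_iff] at hα hβ
      rcases hα with rfl | rfl <;> rcases hβ with rfl | rfl
      · exact absurd rfl hab
      · norm_num [ip_add_left, ip_add_right, ip_sub_left, ip_sub_right, ip_ev_ev, Fin.ext_iff]
      · norm_num [ip_add_left, ip_add_right, ip_sub_left, ip_sub_right, ip_ev_ev, Fin.ext_iff]
      · exact absurd rfl hab
  · intro S hS
    rcases pair_classify hl hS with ⟨a, k, ha, hk, rfl⟩ | ⟨k, m, ε, τ, hk, hm, hkm, hε, hτ, rfl⟩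
    · exact Or.inl (typeI hl a k ha hk)
    · exact Or.inr (typeII hl hl5 k m ε τ hk hm hkm hε hτ)
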